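/- There exists a stable 2-coloring of pairs f : [ω]² → 2 such that every infinite increasing p-homogeneous set for f computes ∅′ (the halting problem). -/

import Mathlib

open Classical in
noncomputable def chr (A : Set ℕ) : ℕ →. ℕ :=
  fun n => Part.some (if n ∈ A then 1 else 0)

/-- The effective join (recursive union) of two sets: `A ⊕ B`. -/
def setJoin (A B : Set ℕ) : Set ℕ :=
  {n | (n % 2 = 0 ∧ n / 2 ∈ A) ∨ (n % 2 = 1 ∧ n / 2 ∈ B)}

/-- Codes for partial recursive functions relative to an oracle. -/
inductive OCode : Type
  | zero | succ | left | right | oracle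
  | pair (a b : OCode) | comp (a b : OCode)
  | prec (a b : OCode) | rfind' (a : OCode)

/-- Evaluation of an oracle code relative to oracle `O`. -/
def OCode.eval (O : ℕ →. ℕ) : OCode → ℕ →. ℕ
  | .zero => pure 0
  | .succ => Nat.succ
  | .left => fun n : ℕ => n.unpair.1
  | .right => fun n : ℕ => n.unpair.2
  | .oracle => O
  | .pair cf cg => fun n => Nat.pair <$> eval O cf n <*> eval O cg n
  | .comp cf cg => fun n => eval O cg n >>= eval O cf
  | .prec cf cg =>
    Nat.unpaired fun a n =>
      n.rec (eval O cf a) fun y IH => do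
        let i ← IH
        eval O cg (Nat.pair a (Nat.pair y i))
  | .rfind' cf =>
    Nat.unpaired fun a m =>
      (Nat.rfind fun n => (fun m => m = 0) <$> eval O cf (Nat.pair a (n + m))).map (· + m)

/-- `g` is partial recursive in the oracle `O`. -/
def RecIn (O g : ℕ →. ℕ) : Prop := ∃ c : OCode, OCode.eval O c = g

/-- Turing reducibility between sets of naturals. -/
def TuringLE (A B : Set ℕ) : Prop := RecIn (chr B) (chr A)

/-- The halting set `∅′`. -/
def K : Set ℕ := {n | ((Denumerable.ofNat Nat.Partrec.Code n).eval n).Dom}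

open Nat.Partrec (Code)

def toOCode : Code → OCode
  | .zero => .zero
  | .succ => .succ
  | .left => .left
  | .right => .right
  | .pair a b => .pair (toOCode a) (toOCode b)
  | .comp a b => .comp (toOCode a) (toOCode b)
  | .prec a b => .prec (toOCode a) (toOCode b)
  | .rfind' a => .rfind' (toOCode a)

theorem toOCode_eval (O : ℕ →. ℕ) (c : Code) : OCode.eval O (toOCode c) = c.eval := by
  induction c <;> simp_all [toOCode, OCode.eval, Nat.Partrec.Code.eval, PFun.coe_val] <;> try rfl

theorem RecIn.of_partrec {O f : ℕ →. ℕ} (h : Nat.Partrec f) : RecIn O f := by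
  obtain ⟨c, rfl⟩ := Nat.Partrec.Code.exists_code.1 h
  exact ⟨toOCode c, toOCode_eval O c⟩

theorem RecIn.oracle {O : ℕ →. ℕ} : RecIn O O := ⟨.oracle, rfl⟩

theorem RecIn.pair {O f g : ℕ →. ℕ} (hf : RecIn O f) (hg : RecIn O g) :
    RecIn O (fun n => Nat.pair <$> f n <*> g n) := by
  obtain ⟨cf, rfl⟩ := hf; obtain ⟨cg, rfl⟩ := hg
  exact ⟨.pair cf cg, rfl⟩

theorem RecIn.comp {O f g : ℕ →. ℕ} (hf : RecIn O f) (hg : RecIn O g) :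
    RecIn O (fun n => g n >>= f) := by
  obtain ⟨cf, rfl⟩ := hf; obtain ⟨cg, rfl⟩ := hg
  exact ⟨.comp cf cg, rfl⟩

theorem RecIn.rfind {O f : ℕ →. ℕ} (hf : RecIn O f) :
    RecIn O (fun a => Nat.rfind fun n => (fun m => m = 0) <$> f (Nat.pair a n)) := by
  obtain ⟨cf, rfl⟩ := hf
  refine ⟨.comp (.rfind' cf) (.pair (.pair .left .right) .zero), funext fun n => ?_⟩
  simp [OCode.eval, Seq.seq, Part.map_id', pure, PFun.pure, Part.bind_some]

theorem RecIn.of_eq {O f g : ℕ →. ℕ} (hf : RecIn O f) (h : ∀ n, f n = g n) : RecIn O g :=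
  (funext h : f = g) ▸ hf

theorem RecIn.of_prim {O : ℕ →. ℕ} {f : ℕ → ℕ} (h : Primrec f) :
    RecIn O (fun n => Part.some (f n)) :=
  RecIn.of_partrec (Nat.Partrec.of_primrec (Primrec.nat_iff.1 h))

/-- Stage-`s` approximation to the halting set. -/
def inK (s n : ℕ) : Bool :=
  (Nat.Partrec.Code.evaln s (Denumerable.ofNat Nat.Partrec.Code n) n).isSome

theorem mem_K_iff (n : ℕ) : n ∈ K ↔ ∃ s, inK s n = true := by
  simp only [K, Set.mem_setOf_eq, Part.dom_iff_mem, inK, Option.isSome_iff_exists]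
  constructor
  · rintro ⟨y, hy⟩
    obtain ⟨k, hk⟩ := Nat.Partrec.Code.evaln_complete.1 hy
    exact ⟨k, y, hk⟩
  · rintro ⟨s, y, hy⟩
    exact ⟨y, Nat.Partrec.Code.evaln_complete.2 ⟨s, hy⟩⟩

theorem inK_mono {s t n : ℕ} (h : s ≤ t) (hs : inK s n = true) : inK t n = true := by
  simp only [inK, Option.isSome_iff_exists] at *
  obtain ⟨x, hx⟩ := hs
  exact ⟨x, Nat.Partrec.Code.evaln_mono h hx⟩

theorem not_inK {s n : ℕ} (h : n ∉ K) : inK s n = false := by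
  rw [mem_K_iff] at h
  push_neg at h
  simpa using h s

/-- `s` is a correct stage for all inputs `≤ x`. -/
def GoodStage (s x : ℕ) : Prop := ∀ i ≤ x, (i ∈ K ↔ inK s i = true)

theorem goodStage_mono {s t x : ℕ} (h : s ≤ t) (hs : GoodStage s x) : GoodStage t x :=
  fun i hi => ⟨fun hK => inK_mono h ((hs i hi).1 hK),
    fun ht => by
      by_contra hK
      simp [not_inK hK] at ht⟩

theorem goodStage_ex (x : ℕ) : ∃ s, GoodStage s x := by
  induction x with
  | zero =>
    rcases Classical.em (0 ∈ K) with h | h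
    · obtain ⟨s, hs⟩ := (mem_K_iff 0).1 h
      exact ⟨s, fun i hi => by rw [Nat.le_zero.1 hi]; exact ⟨fun _ => hs, fun _ => h⟩⟩
    · exact ⟨0, fun i hi => by rw [Nat.le_zero.1 hi]; simp [h, not_inK h]⟩
  | succ x ih =>
    obtain ⟨s, hs⟩ := ih
    rcases Classical.em (x + 1 ∈ K) with h | h
    · obtain ⟨t, ht⟩ := (mem_K_iff _).1 h
      refine ⟨max s t, fun i hi => ?_⟩
      rcases Nat.lt_succ_iff_lt_or_eq.1 (Nat.lt_succ_of_le hi) with h' | h'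
      · exact goodStage_mono (le_max_left s t) hs i (Nat.lt_succ_iff.1 h')
      · rw [h']; exact ⟨fun _ => inK_mono (le_max_right s t) ht, fun _ => h⟩
    · refine ⟨s, fun i hi => ?_⟩
      rcases Nat.lt_succ_iff_lt_or_eq.1 (Nat.lt_succ_of_le hi) with h' | h'
      · exact hs i (Nat.lt_succ_iff.1 h')
      · rw [h']; simp [h, not_inK h]

noncomputable def modl (x : ℕ) : ℕ := (goodStage_ex x).choose

theorem good_modl (x : ℕ) : GoodStage (modl x) x := (goodStage_ex x).choose_spec

/-! Primitive recursive auxiliary functions for the reduction. -/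

def aF (w : ℕ) : ℕ := 2 * (Nat.unpair (Nat.unpair w).2).1
def bF (w : ℕ) : ℕ := 2 * (Nat.unpair (Nat.unpair w).2).2 + 1

def FF (t : ℕ) : ℕ :=
  if (Nat.unpair (Nat.unpair t).1).1 ≤ (Nat.unpair (Nat.unpair (Nat.unpair t).1).2).1 ∧
     (Nat.unpair (Nat.unpair (Nat.unpair t).1).2).1 < (Nat.unpair (Nat.unpair (Nat.unpair t).1).2).2 ∧
     (Nat.unpair (Nat.unpair t).2).1 = 1 ∧ (Nat.unpair (Nat.unpair t).2).2 = 1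
  then 0 else 1

def GG (t : ℕ) : ℕ := bif inK (Nat.unpair (Nat.unpair t).2).2 (Nat.unpair t).1 then 1 else 0

section PrimAux
open Primrec

private def u1 : ℕ → ℕ := fun w => (Nat.unpair w).1
private def u2 : ℕ → ℕ := fun w => (Nat.unpair w).2

theorem prim_u1 : Primrec u1 := fst.comp Primrec.unpair
theorem prim_u2 : Primrec u2 := snd.comp Primrec.unpair

theorem prim_aF : Primrec aF :=
  nat_mul.comp (const 2) (prim_u1.comp prim_u2)

theorem prim_bF : Primrec bF :=
  nat_add.comp (nat_mul.comp (const 2) (prim_u2.comp prim_u2)) (const 1)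

theorem prim_FF : Primrec FF := by
  have hn : Primrec fun t => (Nat.unpair (Nat.unpair t).1).1 := prim_u1.comp prim_u1
  have hx : Primrec fun t => (Nat.unpair (Nat.unpair (Nat.unpair t).1).2).1 :=
    prim_u1.comp (prim_u2.comp prim_u1)
  have hy : Primrec fun t => (Nat.unpair (Nat.unpair (Nat.unpair t).1).2).2 :=
    prim_u2.comp (prim_u2.comp prim_u1)
  have hu : Primrec fun t => (Nat.unpair (Nat.unpair t).2).1 := prim_u1.comp prim_u2
  have hv : Primrec fun t => (Nat.unpair (Nat.unpair t).2).2 := prim_u2.comp prim_u2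
  exact Primrec.ite
    ((PrimrecRel.comp nat_le hn hx).and ((PrimrecRel.comp nat_lt hx hy).and
      ((PrimrecRel.comp Primrec.eq hu (const 1)).and
        (PrimrecRel.comp Primrec.eq hv (const 1)))))
    (const 0) (const 1)

theorem prim_GG : Primrec GG := by
  have hn : Primrec fun t => (Nat.unpair t).1 := prim_u1
  have hy : Primrec fun t => (Nat.unpair (Nat.unpair t).2).2 := prim_u2.comp prim_u2
  have hinK : Primrec fun t => inK ((Nat.unpair (Nat.unpair t).2).2) ((Nat.unpair t).1) := by
    have := Nat.Partrec.Code.primrec_evaln.comp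
      ((hy.pair ((Primrec.ofNat Nat.Partrec.Code).comp hn)).pair hn)
    exact option_isSome.comp this
  exact Primrec.cond hinK (const 1) (const 0)

end PrimAux

/-- There is a stable 2-coloring of pairs such that every infinite increasing
p-homogeneous set for it computes `∅′`. -/
theorem exists_stable_coloring_increasing_phom_computes_halting :
    ∃ f : ℕ → ℕ → Fin 2,
      (∀ x : ℕ, ∃ j : Fin 2, ∃ N : ℕ, ∀ u, N ≤ u → f x u = j) ∧
      ∀ HL HR : Set ℕ, HL.Infinite → HR.Infinite →
        (∃ c : Fin 2, ∀ x ∈ HL, ∀ y ∈ HR, x < y → f x y = c) →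
        TuringLE K (setJoin HL HR) := by
  classical
  refine ⟨fun x u => if modl x ≤ u then 1 else 0,
    fun x => ⟨1, modl x, fun u hu => if_pos hu⟩, ?_⟩
  rintro HL HR hL hR ⟨c, hc⟩
  -- the homogeneous color must be 1
  obtain ⟨x0, hx0, -⟩ := hL.exists_gt 0
  obtain ⟨y0, hy0, hy0'⟩ := hR.exists_gt (max x0 (modl x0))
  have hcx : c = 1 := by
    have h : (if modl x0 ≤ y0 then (1 : Fin 2) else 0) = c :=
      hc x0 hx0 y0 hy0 (lt_of_le_of_lt (le_max_left _ _) hy0')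
    rw [if_pos (le_of_lt (lt_of_le_of_lt (le_max_right _ _) hy0'))] at h
    exact h.symm
  -- hence HR dominates the modulus on HL
  have key : ∀ x ∈ HL, ∀ y ∈ HR, x < y → modl x ≤ y := by
    intro x hx y hy hxy
    by_contra hlt
    have h : (if modl x ≤ y then (1 : Fin 2) else 0) = c := hc x hx y hy hxy
    rw [hcx, if_neg hlt] at h
    exact absurd h (by decide)
  -- set up the oracle
  set O := chr (setJoin HL HR) with hO
  have hOdom : ∀ k, (O k).Dom := fun k => trivial
  set o : ℕ → ℕ := fun k => (O k).get (hOdom k) with ho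
  have hOsome : ∀ k, O k = Part.some (o k) := fun k => (Part.some_get (hOdom k)).symm
  have homem : ∀ k, k ∈ setJoin HL HR → o k = 1 := by
    intro k hk
    simp only [ho, hO, chr, Part.get_some, if_pos hk]
  have homem' : ∀ k, o k = 1 → k ∈ setJoin HL HR := by
    intro k hk
    by_contra hkk
    simp only [ho, hO, chr, Part.get_some, if_neg hkk] at hk
    exact absurd hk (by norm_num)
  -- build the algorithm
  have hid : RecIn O (fun n : ℕ => Part.some n) := RecIn.of_prim Primrec.id
  have ha : RecIn O (fun n => Part.some (aF n)) := RecIn.of_prim prim_aF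
  have hb : RecIn O (fun n => Part.some (bF n)) := RecIn.of_prim prim_bF
  have hF : RecIn O (fun n => Part.some (FF n)) := RecIn.of_prim prim_FF
  have hG : RecIn O (fun n => Part.some (GG n)) := RecIn.of_prim prim_GG
  have h1 : RecIn O (fun w => Part.some (aF w) >>= O) := RecIn.comp RecIn.oracle ha
  have h2 : RecIn O (fun w => Part.some (bF w) >>= O) := RecIn.comp RecIn.oracle hb
  have hpre := hid.pair (h1.pair h2)
  have hcond := RecIn.comp hF hpre
  have hcond' : RecIn O
      (fun w => Part.some (FF (Nat.pair w (Nat.pair (o (aF w)) (o (bF w)))))) := by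
    refine hcond.of_eq fun w => ?_
    have e : ∀ k, (Part.some k >>= O) = Part.some (o k) := fun k => (Part.bind_some k O).trans (hOsome k)
    simp [e, hOsome, Seq.seq]
  have hsearch := hcond'.rfind
  have hfin := RecIn.comp hG (hid.pair hsearch)
  refine hfin.of_eq fun n => ?_
  set cv : ℕ → ℕ := fun w => FF (Nat.pair w (Nat.pair (o (aF w)) (o (bF w)))) with hcv
  set p : ℕ →. Bool :=
    fun k => (fun m => m = 0) <$> (fun w => Part.some (cv w)) (Nat.pair n k) with hp
  have pval : ∀ k, p k = Part.some (decide (cv (Nat.pair n k) = 0)) := by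
    intro k; simp [hp]
  -- witness for termination
  obtain ⟨xw, hxw, hxw'⟩ := hL.exists_gt n
  obtain ⟨yw, hyw, hyw'⟩ := hR.exists_gt xw
  have cvw : cv (Nat.pair n (Nat.pair xw yw)) = 0 := by
    have hax : aF (Nat.pair n (Nat.pair xw yw)) = 2 * xw := by simp [aF]
    have hbx : bF (Nat.pair n (Nat.pair xw yw)) = 2 * yw + 1 := by simp [bF]
    have hox : o (2 * xw) = 1 := homem _ (Or.inl ⟨by omega, by rw [show 2 * xw / 2 = xw by omega]; exact hxw⟩)
    have hoy : o (2 * yw + 1) = 1 := homem _ (Or.inr ⟨by omega, by rw [show (2 * yw + 1) / 2 = yw by omega]; exact hyw⟩)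
    simp [hcv, hax, hbx, hox, hoy, FF, le_of_lt hxw', hyw']
  have hdom : (Nat.rfind p).Dom := by
    rw [Nat.rfind_dom]
    exact ⟨Nat.pair xw yw, by simp [pval, cvw], fun {m} _ => by rw [pval]; trivial⟩
  set k0 := (Nat.rfind p).get hdom with hk0def
  have hk0 : k0 ∈ Nat.rfind p := Part.get_mem hdom
  have htrue : cv (Nat.pair n k0) = 0 := by
    have := Nat.rfind_spec hk0
    rw [pval] at this
    simpa using this
  -- decode the found pair
  set x1 := (Nat.unpair k0).1 with hx1
  set y1 := (Nat.unpair k0).2 with hy1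
  have hcvfacts : n ≤ x1 ∧ x1 < y1 ∧ o (2 * x1) = 1 ∧ o (2 * y1 + 1) = 1 := by
    have hax : aF (Nat.pair n k0) = 2 * x1 := by simp [aF, hx1]
    have hbx : bF (Nat.pair n k0) = 2 * y1 + 1 := by simp [bF, hy1]
    rw [hcv] at htrue
    simp only [hax, hbx, FF, Nat.unpair_pair] at htrue
    split_ifs at htrue with h
    · exact h
  obtain ⟨hnx1, hx1y1, hox1, hoy1⟩ := hcvfacts
  have hx1HL : x1 ∈ HL := by
    have := homem' _ hox1
    rcases this with ⟨-, h⟩ | ⟨h, -⟩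
    · rwa [show 2 * x1 / 2 = x1 by omega] at h
    · omega
  have hy1HR : y1 ∈ HR := by
    have := homem' _ hoy1
    rcases this with ⟨h, -⟩ | ⟨-, h⟩
    · omega
    · rwa [show (2 * y1 + 1) / 2 = y1 by omega] at h
  have hgood : GoodStage y1 x1 :=
    goodStage_mono (key x1 hx1HL y1 hy1HR hx1y1) (good_modl x1)
  have hiff : n ∈ K ↔ inK y1 n = true := hgood n hnx1
  -- compute the final value
  have hrfind : Nat.rfind p = Part.some k0 := (Part.some_get hdom).symm
  show (Nat.pair <$> Part.some n <*> Nat.rfind p) >>= (fun t => Part.some (GG t)) = chr K n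
  rw [hrfind]
  have hGGval : GG (Nat.pair n k0) = if n ∈ K then 1 else 0 := by
    simp only [GG, Nat.unpair_pair, ← hy1]
    rcases Classical.em (n ∈ K) with h | h
    · rw [if_pos h, hiff.1 h]; rfl
    · rw [if_neg h]
      have : inK y1 n = false := by
        rcases Bool.eq_false_or_eq_true (inK y1 n) with h' | h'
        · exact absurd (hiff.2 h') h
        · exact h'
      rw [this]; rfl
  simp [Seq.seq, hGGval, chr]
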